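/- For univariate random variables X and Y with quantile functions Q_X and Q_Y, X is Bickel-Lehmann less dispersed than Y (i.e., Q_Y - Q_X is nondecreasing on (0,1)) if and only if there exists a random variable Z comonotonic with X such that Y has the same distribution as X + Z. -/

import Mathlib

open MeasureTheory

/-- The (upper) quantile function of a distribution on ℝ. -/
noncomputable def quantile (ν : Measure ℝ) (t : ℝ) : ℝ :=
  sInf {x : ℝ | ν (Set.Iic x) > ENNReal.ofReal t}

/-- The uniform distribution on (0,1). -/
noncomputable def uniform01 : Measure ℝ := volume.restrict (Set.Ioo 0 1)

section Aux

open Set Filter Topology ProbabilityTheory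

namespace LM

instance : IsProbabilityMeasure uniform01 := by
  constructor
  rw [uniform01, Measure.restrict_apply_univ, Real.volume_Ioo]
  norm_num

variable (ν : Measure ℝ) [IsProbabilityMeasure ν]

lemma quantile_eq {t : ℝ} (ht : 0 ≤ t) :
    quantile ν t = sInf {x : ℝ | t < cdf ν x} := by
  unfold quantile
  congr 1
  ext x
  simp only [Set.mem_setOf_eq, gt_iff_lt, ← ofReal_cdf ν x]
  exact ENNReal.ofReal_lt_ofReal_iff_of_nonneg ht

lemma Sne {t : ℝ} (ht : t < 1) : {x : ℝ | t < cdf ν x}.Nonempty :=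
  ((tendsto_cdf_atTop ν).eventually_const_lt ht).exists

lemma Sbdd {t : ℝ} (ht : 0 < t) : BddBelow {x : ℝ | t < cdf ν x} := by
  obtain ⟨x0, hx0⟩ := ((tendsto_cdf_atBot ν).eventually_lt_const ht).exists
  refine ⟨x0, fun y hy => ?_⟩
  by_contra hlt
  push_neg at hlt
  exact absurd hy (not_lt.2 ((monotone_cdf ν hlt.le).trans hx0.le))

lemma quantile_le {t x : ℝ} (ht : 0 < t) (hx : t < cdf ν x) : quantile ν t ≤ x := by
  rw [quantile_eq ν ht.le]; exact csInf_le (Sbdd ν ht) hx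

lemma le_cdf_quantile {t : ℝ} (ht : 0 < t) (ht1 : t < 1) : t ≤ cdf ν (quantile ν t) := by
  have key : ∀ y ∈ Ioi (quantile ν t), t ≤ cdf ν y := by
    intro y hy
    rw [mem_Ioi, quantile_eq ν ht.le] at hy
    obtain ⟨z, hz, hzy⟩ := exists_lt_of_csInf_lt (Sne ν ht1) hy
    exact (le_of_lt hz).trans (monotone_cdf ν hzy.le)
  have hrc : Tendsto (cdf ν) (𝓝[>] (quantile ν t)) (𝓝 (cdf ν (quantile ν t))) :=
    ((cdf ν).right_continuous _).mono_left (nhdsWithin_mono _ Ioi_subset_Ici_self)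
  exact ge_of_tendsto hrc (eventually_nhdsWithin_of_forall key)

lemma cdf_ge_of_quantile_le {t x : ℝ} (ht : 0 < t) (ht1 : t < 1) (h : quantile ν t ≤ x) :
    t ≤ cdf ν x :=
  (le_cdf_quantile ν ht ht1).trans (monotone_cdf ν h)

lemma quantile_monoOn : MonotoneOn (quantile ν) (Ioo 0 1) := by
  intro s hs t ht hst
  rw [quantile_eq ν hs.1.le, quantile_eq ν ht.1.le]
  exact le_csInf (Sne ν ht.2) fun x hx => csInf_le (Sbdd ν hs.1) (hst.trans_lt hx)

/-- Inverse transform sampling. -/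
lemma map_eq {g : ℝ → ℝ} (hg : Measurable g) (hgq : ∀ u ∈ Ioo (0:ℝ) 1, g u = quantile ν u) :
    uniform01.map g = ν := by
  haveI : IsProbabilityMeasure (uniform01.map g) := Measure.isProbabilityMeasure_map hg.aemeasurable
  refine Measure.ext_of_Iic _ _ fun x => ?_
  rw [Measure.map_apply hg measurableSet_Iic, uniform01,
    Measure.restrict_apply (hg measurableSet_Iic)]
  have hsub1 : Ioo 0 (cdf ν x) ⊆ g ⁻¹' (Iic x) ∩ Ioo 0 1 := by
    intro u hu
    have hu1 : u ∈ Ioo (0:ℝ) 1 := ⟨hu.1, hu.2.trans_le (cdf_le_one ν x)⟩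
    refine ⟨?_, hu1⟩
    simp only [mem_preimage, mem_Iic]
    rw [hgq u hu1]
    exact quantile_le ν hu.1 hu.2
  have hsub2 : g ⁻¹' (Iic x) ∩ Ioo 0 1 ⊆ Ioc 0 (cdf ν x) := by
    rintro u ⟨hu, hu1⟩
    refine ⟨hu1.1, cdf_ge_of_quantile_le ν hu1.1 hu1.2 ?_⟩
    rw [← hgq u hu1]; exact hu
  have h1 := measure_mono (μ := volume) hsub1
  have h2 := measure_mono (μ := volume) hsub2
  rw [Real.volume_Ioo, sub_zero] at h1
  rw [Real.volume_Ioc, sub_zero] at h2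
  rw [← ofReal_cdf ν x]
  exact le_antisymm h2 h1

variable {G : ℝ → ℝ}

lemma map_Iic (hG : Measurable G) (x : ℝ) :
    (uniform01.map G) (Iic x) = volume (G ⁻¹' (Iic x) ∩ Ioo 0 1) := by
  rw [Measure.map_apply hG measurableSet_Iic, uniform01,
    Measure.restrict_apply (hG measurableSet_Iic)]

lemma le_quantile_map (hG : Measurable G) (hmono : MonotoneOn G (Ioo 0 1)) {t : ℝ}
    (ht : t ∈ Ioo (0:ℝ) 1) : G t ≤ quantile (uniform01.map G) t := by
  haveI : IsProbabilityMeasure (uniform01.map G) := Measure.isProbabilityMeasure_map hG.aemeasurable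
  rw [quantile_eq _ ht.1.le]
  refine le_csInf (Sne _ ht.2) fun x hx => ?_
  have hμ : ENNReal.ofReal t < (uniform01.map G) (Iic x) := by
    rw [← ofReal_cdf]
    exact (ENNReal.ofReal_lt_ofReal_iff_of_nonneg ht.1.le).2 hx
  rw [map_Iic hG] at hμ
  by_contra hcon
  push_neg at hcon
  have hsub : G ⁻¹' (Iic x) ∩ Ioo 0 1 ⊆ Ioc 0 t := by
    rintro u ⟨hu, hu1⟩
    refine ⟨hu1.1, ?_⟩
    by_contra hut
    push_neg at hut
    exact absurd ((hmono ht hu1 hut.le).trans hu) (not_le.2 hcon)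
  have hle := measure_mono (μ := volume) hsub
  rw [Real.volume_Ioc, sub_zero] at hle
  exact absurd (hμ.trans_le hle) (lt_irrefl _)

lemma quantile_map_le (hG : Measurable G) (hmono : MonotoneOn G (Ioo 0 1)) {t t' : ℝ}
    (ht : t ∈ Ioo (0:ℝ) 1) (ht' : t' ∈ Ioo (0:ℝ) 1) (htt' : t < t') :
    quantile (uniform01.map G) t ≤ G t' := by
  haveI : IsProbabilityMeasure (uniform01.map G) := Measure.isProbabilityMeasure_map hG.aemeasurable
  refine quantile_le _ ht.1 ?_
  have hsub : Ioo (0:ℝ) t' ⊆ G ⁻¹' (Iic (G t')) ∩ Ioo 0 1 := by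
    intro u hu
    have hu1 : u ∈ Ioo (0:ℝ) 1 := ⟨hu.1, hu.2.trans ht'.2⟩
    exact ⟨hmono hu1 ht' hu.2.le, hu1⟩
  have h := measure_mono (μ := volume) hsub
  rw [Real.volume_Ioo, sub_zero, ← map_Iic hG] at h
  rw [← ofReal_cdf] at h
  exact htt'.trans_le ((ENNReal.ofReal_le_ofReal_iff (cdf_nonneg _ _)).1 h)

lemma ae_eq_quantile_map (hG : Measurable G) (hmono : MonotoneOn G (Ioo 0 1)) :
    ∀ᵐ u ∂uniform01, G u = quantile (uniform01.map G) u := by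
  set μ := uniform01.map G with hμ
  set B := {u | u ∈ Ioo (0:ℝ) 1 ∧ G u < quantile μ u} with hB
  have hcount : B.Countable := by
    classical
    set f : ℝ → ℚ := fun u =>
      if h : ∃ q : ℚ, G u < (q:ℝ) ∧ (q:ℝ) < quantile μ u then h.choose else 0 with hf
    have hfspec : ∀ u ∈ B, G u < (f u : ℝ) ∧ ((f u : ℝ)) < quantile μ u := by
      intro u hu
      have hex : ∃ q : ℚ, G u < (q:ℝ) ∧ (q:ℝ) < quantile μ u := exists_rat_btwn hu.2
      simp only [hf, dif_pos hex]
      exact hex.choose_spec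
    have hstep : ∀ u ∈ B, ∀ v ∈ B, u < v → (f u : ℝ) < (f v : ℝ) := by
      intro u hu v hv huv
      have h1 := (hfspec u hu).2
      have h2 := (hfspec v hv).1
      have h3 : quantile μ u ≤ G v := quantile_map_le hG hmono hu.1 hv.1 huv
      linarith
    have hinj : Set.InjOn f B := by
      intro u hu v hv huv
      rcases lt_trichotomy u v with h | h | h
      · exact absurd (congrArg (fun q : ℚ => (q:ℝ)) huv) (ne_of_lt (hstep u hu v hv h))
      · exact h
      · exact absurd (congrArg (fun q : ℚ => (q:ℝ)) huv) (ne_of_gt (hstep v hv u hu h))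
    exact Set.countable_of_injective_of_countable_image hinj (Set.to_countable _)
  have hB0 : uniform01 B = 0 := by
    have h1 : volume B = 0 := hcount.measure_zero _
    have h2 : uniform01 B ≤ volume B := Measure.le_iff'.1 Measure.restrict_le_self B
    exact le_antisymm (h1 ▸ h2) (by simp)
  have hmem : ∀ᵐ u ∂uniform01, u ∈ Ioo (0:ℝ) 1 := ae_restrict_mem measurableSet_Ioo
  filter_upwards [hmem, measure_eq_zero_iff_ae_notMem.1 hB0] with u hu hnB
  by_contra hne
  exact hnB ⟨hu, lt_of_le_of_ne (le_quantile_map hG hmono hu) hne⟩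

/-! Clamping machinery: a measurable function equal to the quantile on `(0,1)`. -/

noncomputable def tau : ℝ → ℝ := fun u => (2*u - 1)/(1 - |2*u - 1|)

noncomputable def sigma' : ℝ → ℝ := fun t => (t / (1 + |t|) + 1)/2

lemma aux_mono : Monotone fun t : ℝ => t / (1 + |t|) := by
  intro a b hab
  have ha : (0:ℝ) < 1 + |a| := by positivity
  have hb : (0:ℝ) < 1 + |b| := by positivity
  rw [div_le_div_iff₀ ha hb]
  rcases abs_cases a with ⟨h1, h2⟩ | ⟨h1, h2⟩ <;> rcases abs_cases b with ⟨h3, h4⟩ | ⟨h3, h4⟩ <;>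
    nlinarith

lemma sigma'_mono : Monotone sigma' := by
  intro a b hab
  have := aux_mono hab
  simp only [sigma']
  linarith

lemma sigma'_mem (t : ℝ) : sigma' t ∈ Ioo (0:ℝ) 1 := by
  have ha : (0:ℝ) < 1 + |t| := by positivity
  have h2 : t / (1 + |t|) < 1 := (div_lt_one ha).2 (lt_of_le_of_lt (le_abs_self t) (by linarith))
  have h3 : -1 < t / (1 + |t|) := by
    rw [lt_div_iff₀ ha]
    nlinarith [neg_abs_le t]
  constructor
  · simp only [sigma']; linarith
  · simp only [sigma']; linarith

lemma tau_meas : Measurable tau := by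
  unfold tau
  exact ((measurable_const.mul measurable_id').sub measurable_const).div
    (measurable_const.sub ((measurable_const.mul measurable_id').sub measurable_const).abs)

lemma sigma'_tau {u : ℝ} (hu : u ∈ Ioo (0:ℝ) 1) : sigma' (tau u) = u := by
  obtain ⟨hu0, hu1⟩ := hu
  set v := 2*u - 1 with hv
  have hva : |v| < 1 := abs_lt.2 ⟨by linarith, by linarith⟩
  have hd : 0 < 1 - |v| := by linarith
  have htau : tau u = v / (1 - |v|) := rfl
  rw [htau]
  unfold sigma'
  have habs : |v / (1 - |v|)| = |v| / (1 - |v|) := by rw [abs_div, abs_of_pos hd]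
  rw [habs]
  have h1 : 1 + |v| / (1 - |v|) = 1 / (1 - |v|) := by field_simp; ring
  rw [h1]
  have h2 : v / (1 - |v|) / (1 / (1 - |v|)) = v := by field_simp
  rw [h2, hv]
  ring

/-- The clamped quantile function: measurable, equal to the quantile on `(0,1)`. -/
noncomputable def qc : ℝ → ℝ := fun u => quantile ν (sigma' (tau u))

lemma qc_meas : Measurable (qc ν) := by
  have hm : Monotone fun t => quantile ν (sigma' t) := fun a b hab =>
    quantile_monoOn ν (sigma'_mem a) (sigma'_mem b) (sigma'_mono hab)
  exact hm.measurable.comp tau_meas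

lemma qc_eq {u : ℝ} (hu : u ∈ Ioo (0:ℝ) 1) : qc ν u = quantile ν u := by
  unfold qc
  rw [sigma'_tau hu]

end LM

end Aux

open Set Filter ProbabilityTheory LM in
/-- Landsberger–Meilijson: X is Bickel-Lehmann less dispersed than Y
(Q_Y - Q_X nondecreasing on (0,1)) iff there exists Z comonotonic with (a copy of) X
such that Y =_d X + Z. -/
theorem stmt_6 {Ω : Type*} [MeasurableSpace Ω] (P : Measure Ω) [IsProbabilityMeasure P]
    (X Y : Ω → ℝ) (hX : Measurable X) (hY : Measurable Y)
    (hXi : Integrable X P) (hYi : Integrable Y P) :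
    MonotoneOn (fun u => quantile (P.map Y) u - quantile (P.map X) u) (Set.Ioo 0 1)
    ↔ ∃ (Ω' : Type) (_ : MeasurableSpace Ω') (P' : Measure Ω') (X' Z U : Ω' → ℝ),
        IsProbabilityMeasure P' ∧ Measurable X' ∧ Measurable Z ∧ Measurable U ∧
        P'.map X' = P.map X ∧ P'.map U = uniform01 ∧
        (∀ᵐ ω ∂P', X' ω = quantile (P'.map X') (U ω)) ∧
        (∀ᵐ ω ∂P', Z ω = quantile (P'.map Z) (U ω)) ∧
        P'.map (fun ω => X' ω + Z ω) = P.map Y := by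
  haveI hpX : IsProbabilityMeasure (P.map X) := Measure.isProbabilityMeasure_map hX.aemeasurable
  haveI hpY : IsProbabilityMeasure (P.map Y) := Measure.isProbabilityMeasure_map hY.aemeasurable
  set νX := P.map X with hνX
  set νY := P.map Y with hνY
  have hmemU : ∀ᵐ u ∂uniform01, u ∈ Ioo (0:ℝ) 1 := ae_restrict_mem measurableSet_Ioo
  constructor
  · -- forward direction: construct the coupling on (0,1)
    intro hmon
    refine ⟨ℝ, inferInstance, uniform01, qc νX, fun u => qc νY u - qc νX u, id,
      inferInstance, qc_meas νX, (qc_meas νY).sub (qc_meas νX), measurable_id, ?_, ?_, ?_, ?_, ?_⟩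
    · exact map_eq νX (qc_meas νX) fun u hu => qc_eq νX hu
    · exact Measure.map_id
    · have h5 : uniform01.map (qc νX) = νX := map_eq νX (qc_meas νX) fun u hu => qc_eq νX hu
      rw [h5]
      filter_upwards [hmemU] with u hu
      exact qc_eq νX hu
    · have hGm : Measurable fun u => qc νY u - qc νX u := (qc_meas νY).sub (qc_meas νX)
      have hGmono : MonotoneOn (fun u => qc νY u - qc νX u) (Ioo 0 1) := by
        intro a ha b hb hab
        have := hmon ha hb hab
        simp only at this ⊢
        rw [qc_eq νY ha, qc_eq νX ha, qc_eq νY hb, qc_eq νX hb]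
        exact this
      exact ae_eq_quantile_map hGm hGmono
    · refine map_eq νY ((qc_meas νX).add ((qc_meas νY).sub (qc_meas νX))) fun u hu => ?_
      simp only
      rw [qc_eq νY hu]
      ring
  · -- converse direction
    rintro ⟨Ω', mΩ', P', X', Z, U, hP', hX', hZ, hU, hmapX, hmapU, haeX, haeZ, hmapSum⟩
    haveI := hP'
    haveI hpZ : IsProbabilityMeasure (P'.map Z) := Measure.isProbabilityMeasure_map hZ.aemeasurable
    set νZ := P'.map Z with hνZ
    set G : ℝ → ℝ := fun u => qc νX u + qc νZ u with hG
    have hGm : Measurable G := (qc_meas νX).add (qc_meas νZ)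
    have hGmono : MonotoneOn G (Ioo 0 1) := by
      intro a ha b hb hab
      simp only [hG]
      rw [qc_eq νX ha, qc_eq νZ ha, qc_eq νX hb, qc_eq νZ hb]
      exact add_le_add (quantile_monoOn νX ha hb hab) (quantile_monoOn νZ ha hb hab)
    have hUmem : ∀ᵐ ω ∂P', U ω ∈ Ioo (0:ℝ) 1 := by
      have h : ∀ᵐ u ∂(P'.map U), u ∈ Ioo (0:ℝ) 1 := by rw [hmapU]; exact hmemU
      exact (ae_map_iff hU.aemeasurable measurableSet_Ioo).1 h
    have hae : (fun ω => X' ω + Z ω) =ᵐ[P'] (G ∘ U) := by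
      filter_upwards [haeX, haeZ, hUmem] with ω h1 h2 h3
      simp only [Function.comp_apply, hG]
      rw [h1, h2, hmapX, qc_eq νX h3, qc_eq νZ h3]
    have hmap2 : uniform01.map G = νY :=
      calc uniform01.map G = (P'.map U).map G := by rw [hmapU]
        _ = P'.map (G ∘ U) := Measure.map_map hGm hU
        _ = P'.map (fun ω => X' ω + Z ω) := (Measure.map_congr hae).symm
        _ = νY := hmapSum
    -- now prove monotonicity of the quantile difference
    intro s hs t ht hst
    simp only
    rcases eq_or_lt_of_le hst with rfl | hlt
    · exact le_refl _
    have key : ∀ ε : ℝ, 0 < ε →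
        quantile νY s - quantile νX s ≤ quantile νY t - quantile νX t + ε := by
      intro ε hε
      obtain ⟨x, hx1, hx2⟩ : ∃ x, s < cdf νX x ∧ x < quantile νX s + ε := by
        have hlt' : sInf {x | s < cdf νX x} < quantile νX s + ε := by
          rw [← quantile_eq νX hs.1.le]; linarith
        exact exists_lt_of_csInf_lt (Sne νX hs.2) hlt'
      set c := cdf νX x with hc
      set s' := min t ((s + c)/2) with hs'
      have hss' : s < s' := lt_min hlt (by simp only [hc] at hx1 ⊢; linarith)
      have hs't : s' ≤ t := min_le_left _ _
      have hs'mem : s' ∈ Ioo (0:ℝ) 1 := ⟨hs.1.trans hss', lt_of_le_of_lt hs't ht.2⟩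
      have hs'c : s' < c := lt_of_le_of_lt (min_le_right _ _) (by linarith)
      have hQXs' : quantile νX s' ≤ x := quantile_le νX hs'mem.1 hs'c
      have hQZ : quantile νZ s' ≤ quantile νZ t := quantile_monoOn νZ hs'mem ht hs't
      have hb : quantile νY s ≤ G s' := by
        have := quantile_map_le hGm hGmono hs hs'mem hss'
        rwa [hmap2] at this
      have ha : G t ≤ quantile νY t := by
        have := le_quantile_map hGm hGmono ht
        rwa [hmap2] at this
      have hGs' : G s' = quantile νX s' + quantile νZ s' := by
        simp only [hG]; rw [qc_eq νX hs'mem, qc_eq νZ hs'mem]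
      have hGt : G t = quantile νX t + quantile νZ t := by
        simp only [hG]; rw [qc_eq νX ht, qc_eq νZ ht]
      linarith
    by_contra hcon
    push_neg at hcon
    have := key (((quantile νY s - quantile νX s) - (quantile νY t - quantile νX t))/2)
      (by linarith)
    linarith
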